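/- Fix m ≥ 2, cardinal utilities v_1 > v_2 > ⋯ > v_m, and a loss-dominance parameter Λ ≥ 0. The true ROL (1,2,…,m) is optimal for every attainability distribution P if and only if Λ ≤ 1. -/

import Mathlib

open Finset

/-- An attainability distribution over states `A : Fin (m+2) → Bool`:
nonnegative, sums to one, and the outside option (school `m+2`, the last one)
is always attainable. -/
def IsAttDist {m : ℕ} (P : (Fin (m + 2) → Bool) → ℝ) : Prop :=
  (∀ A, 0 ≤ P A) ∧ (∑ A : Fin (m + 2) → Bool, P A = 1) ∧
    ∀ A : Fin (m + 2) → Bool, A (Fin.last (m + 1)) = false → P A = 0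

/-- Full support: every state in which the outside option is attainable has
strictly positive probability. -/
def FullSupport {m : ℕ} (P : (Fin (m + 2) → Bool) → ℝ) : Prop :=
  ∀ A : Fin (m + 2) → Bool, A (Fin.last (m + 1)) = true → 0 < P A

/-- Match probability of school `s` under ROL `ρ` (where `ρ k` is the school
ranked in position `k`): the probability that `s` is attainable and no school
ranked before `s` is attainable. -/
def matchProb {m : ℕ} (P : (Fin (m + 2) → Bool) → ℝ)
    (ρ : Equiv.Perm (Fin (m + 2))) (s : Fin (m + 2)) : ℝ :=
  ∑ A : Fin (m + 2) → Bool,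
    if A s = true ∧ ∀ ℓ, ℓ < ρ.symm s → A (ρ ℓ) = false then P A else 0

/-- Reference-dependent expected utility of a lottery `f` with loss dominance `Λ`. -/
def utility {m : ℕ} (Λ : ℝ) (v f : Fin (m + 2) → ℝ) : ℝ :=
  (∑ s, f s * v s) -
    Λ * ∑ s, ∑ r ∈ Finset.univ.filter (fun r => s < r), f s * f r * (v s - v r)

/-- An ROL is strictly optimal if its utility strictly exceeds that of every ROL
inducing a different vector of match probabilities. -/
def StrictlyOptimal {m : ℕ} (Λ : ℝ) (v : Fin (m + 2) → ℝ)
    (P : (Fin (m + 2) → Bool) → ℝ) (ρ : Equiv.Perm (Fin (m + 2))) : Prop :=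
  ∀ ρ' : Equiv.Perm (Fin (m + 2)), matchProb P ρ' ≠ matchProb P ρ →
    utility Λ v (matchProb P ρ') < utility Λ v (matchProb P ρ)

/-- An ROL is (weakly) optimal if its utility is weakly greater than that of
every other ROL. -/
def Optimal {m : ℕ} (Λ : ℝ) (v : Fin (m + 2) → ℝ)
    (P : (Fin (m + 2) → Bool) → ℝ) (ρ : Equiv.Perm (Fin (m + 2))) : Prop :=
  ∀ ρ' : Equiv.Perm (Fin (m + 2)),
    utility Λ v (matchProb P ρ') ≤ utility Λ v (matchProb P ρ)

/-- Top-rank monotonicity of an ROL `ρ` (`ρ k` = school at rank `k`; lower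
school label = more preferred). -/
def TopRankMonotone {m : ℕ} (ρ : Equiv.Perm (Fin (m + 2))) : Prop :=
  (∀ k i : Fin (m + 2), ρ k < ρ 0 → ρ i < ρ k → k < i) ∧
    ∀ l j : Fin (m + 2), ρ 0 < ρ l → ρ j < ρ l → j < l

namespace Stmt14Aux

/-! ### Generic algebraic identities over ℕ-indexed sums -/

lemma abel_eq (V g : ℕ → ℝ) (n : ℕ) :
    ∑ i ∈ range n, V i * g i =
      V (n-1) * (∑ j ∈ range n, g j) -
        ∑ i ∈ range (n-1), (V (i+1) - V i) * (∑ j ∈ range (i+1), g j) := by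
  simpa only [smul_eq_mul] using Finset.sum_range_by_parts V g n

lemma Ico_eq_filter (s n : ℕ) : Ico (s+1) n = (range n).filter (fun r => s < r) := by
  ext x; simp [mem_Ico, mem_range, mem_filter, Nat.succ_le]; omega

lemma filter_lt_eq (r n : ℕ) (h : r ≤ n) : (range n).filter (fun s => s < r) = range r := by
  ext x; simp [mem_filter, mem_range]; omega

lemma tri_swap (h : ℕ → ℕ → ℝ) (n : ℕ) :
    ∑ s ∈ range n, ∑ r ∈ Ico (s+1) n, h s r
      = ∑ r ∈ range n, ∑ s ∈ range r, h s r := by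
  have h1 : ∀ s ∈ range n, ∑ r ∈ Ico (s+1) n, h s r
      = ∑ r ∈ range n, if s < r then h s r else 0 := by
    intro s _
    rw [Ico_eq_filter, sum_filter]
  rw [sum_congr rfl h1, Finset.sum_comm]
  refine sum_congr rfl fun r hr => ?_
  rw [← sum_filter, filter_lt_eq _ _ (le_of_lt (mem_range.mp hr))]

lemma key_identity (Λ : ℝ) (F V : ℕ → ℝ) (n : ℕ)
    (hS : ∑ j ∈ range n, F j = 1) :
    (∑ i ∈ range n, F i * V i)
      - Λ * ∑ s ∈ range n, ∑ r ∈ Ico (s+1) n, F s * F r * (V s - V r)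
    = V (n-1) + ∑ t ∈ range (n-1),
        (V t - V (t+1)) * ((∑ j ∈ range (t+1), F j)
          - Λ * ((∑ j ∈ range (t+1), F j) * (1 - ∑ j ∈ range (t+1), F j))) := by
  set G : ℕ → ℝ := fun t => ∑ j ∈ range (t+1), F j with hG
  set G' : ℕ → ℝ := fun t => ∑ j ∈ range t, F j with hG'
  have hGG' : ∀ i, G i = G' i + F i := by
    intro i; simp only [hG, hG', sum_range_succ]
  have hstep : ∀ i, G' (i+1) = G' i + F i := by
    intro i; simp only [hG', sum_range_succ]
  have hA : ∑ i ∈ range n, F i * V i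
      = V (n-1) + ∑ t ∈ range (n-1), (V t - V (t+1)) * G t := by
    have h0 := abel_eq V F n
    simp only [mul_comm (F _) (V _)] at *
    rw [h0, hS, mul_one, sub_eq_add_neg, ← Finset.sum_neg_distrib]
    refine congrArg _ (sum_congr rfl fun t _ => ?_)
    have h : G t = ∑ j ∈ range (t+1), F j := rfl
    rw [h]; ring
  set Q : ℕ → ℝ := fun i => G' i * (1 - G' i) with hQ
  set g : ℕ → ℝ := fun i => Q (i+1) - Q i with hg
  have hsum_g : ∀ k, ∑ j ∈ range k, g j = Q k := by
    intro k
    have h1 := Finset.sum_range_sub Q k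
    simp only [hg, h1, hQ, hG']
    have h2 := Finset.sum_range_sub (fun i => (∑ j ∈ range i, F j) * (1 - ∑ j ∈ range i, F j)) k
    rw [h2]
    simp
  have hQn : Q n = 0 := by
    simp only [hQ, hG', hS]; ring
  have habel : ∑ i ∈ range n, V i * g i
      = ∑ t ∈ range (n-1), (V t - V (t+1)) * Q (t+1) := by
    rw [abel_eq V g n, hsum_g, hQn, mul_zero, zero_sub, ← Finset.sum_neg_distrib]
    exact sum_congr rfl fun t _ => by rw [hsum_g]; ring
  have hB : ∑ s ∈ range n, ∑ r ∈ Ico (s+1) n, F s * F r * (V s - V r)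
      = ∑ t ∈ range (n-1), (V t - V (t+1)) * (G t * (1 - G t)) := by
    have expand : ∀ s ∈ range n, ∑ r ∈ Ico (s+1) n, F s * F r * (V s - V r)
        = F s * V s * (1 - G s) - ∑ r ∈ Ico (s+1) n, F s * (F r * V r) := by
      intro s hs
      have h1 : ∑ r ∈ Ico (s+1) n, F r = 1 - G s := by
        rw [Finset.sum_Ico_eq_sub _ (mem_range.mp hs), hS, hG]
      have h2 : ∀ r ∈ Ico (s+1) n, F s * F r * (V s - V r)
          = (F s * V s) * F r - F s * (F r * V r) := fun r _ => by ring
      rw [sum_congr rfl h2, sum_sub_distrib, ← mul_sum, h1]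
    rw [sum_congr rfl expand, sum_sub_distrib, tri_swap, ← habel]
    have h3 : ∀ r ∈ range n, ∑ s ∈ range r, F s * (F r * V r) = G' r * (F r * V r) := by
      intro r _; rw [← sum_mul]
    rw [sum_congr rfl h3, ← sum_sub_distrib]
    refine sum_congr rfl fun i _ => ?_
    simp only [hg, hQ, hstep i, hGG' i]
    ring
  rw [hA, hB, mul_sum, add_sub_assoc, ← sum_sub_distrib]
  refine congrArg _ (sum_congr rfl fun t _ => ?_)
  have h : (∑ j ∈ range (t+1), F j) = G t := rfl
  rw [h]; ring

/-! ### ℕ-extension of finitely indexed vectors -/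

noncomputable def e {n : ℕ} (g : Fin n → ℝ) : ℕ → ℝ :=
  fun i => if h : i < n then g ⟨i, h⟩ else 0

lemma e_val {n : ℕ} (g : Fin n → ℝ) (i : Fin n) : e g i.val = g i := by
  simp [e]

lemma sum_e {n : ℕ} (g : Fin n → ℝ) : ∑ i ∈ range n, e g i = ∑ s, g s := by
  rw [← Fin.sum_univ_eq_sum_range (fun i => e g i) n]
  simp [e_val]

lemma range_cumul {n : ℕ} (g : Fin n → ℝ) (t : ℕ) (ht : t < n) :
    ∑ j ∈ range (t+1), e g j = ∑ s : Fin n, (if s.val ≤ t then g s else 0) := by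
  have h1 : ∑ s : Fin n, (if s.val ≤ t then g s else 0)
      = ∑ j ∈ range n, (if j ≤ t then e g j else 0) := by
    rw [← Fin.sum_univ_eq_sum_range (fun j => if j ≤ t then e g j else 0) n]
    refine sum_congr rfl fun s _ => ?_
    rw [e_val]
  rw [h1]
  rw [← Finset.sum_subset (Finset.range_subset_range.mpr ht)
    (fun x _ hx => if_neg (fun hxt => hx (mem_range.mpr (Nat.lt_succ_of_le hxt))))]
  exact sum_congr rfl fun j hj => (if_pos (Nat.lt_succ_iff.mp (mem_range.mp hj))).symm

lemma utility_eq_nat {m : ℕ} (Λ : ℝ) (v f : Fin (m+2) → ℝ) :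
    utility Λ v f = (∑ i ∈ range (m+2), e f i * e v i)
      - Λ * ∑ s ∈ range (m+2), ∑ r ∈ Ico (s+1) (m+2), e f s * e f r * (e v s - e v r) := by
  unfold utility
  congr 1
  · rw [← Fin.sum_univ_eq_sum_range (fun i => e f i * e v i) (m+2)]
    exact sum_congr rfl fun s _ => by rw [e_val, e_val]
  · congr 1
    rw [← Fin.sum_univ_eq_sum_range
      (fun i => ∑ r ∈ Ico (i+1) (m+2), e f i * e f r * (e v i - e v r)) (m+2)]
    refine sum_congr rfl fun s _ => ?_
    have h2 : Ico (s.val+1) (m+2) = (range (m+2)).filter (fun r => s.val < r) := by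
      ext x; simp [mem_Ico, mem_range, mem_filter, Nat.succ_le]; omega
    rw [h2, sum_filter, sum_filter,
      ← Fin.sum_univ_eq_sum_range
        (fun j => if (s:ℕ) < j then e f s.val * e f j * (e v s.val - e v j) else 0) (m+2)]
    refine sum_congr rfl fun r _ => ?_
    simp only [e_val, Fin.lt_def]

/-! ### Match probabilities: first-attainable structure -/

def K {m : ℕ} (ρ : Equiv.Perm (Fin (m + 2))) (A : Fin (m + 2) → Bool) : Finset (Fin (m + 2)) :=
  univ.filter (fun k => A (ρ k) = true)

lemma mem_K {m : ℕ} {ρ : Equiv.Perm (Fin (m + 2))} {A : Fin (m + 2) → Bool} {k : Fin (m + 2)} :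
    k ∈ K ρ A ↔ A (ρ k) = true := by simp [K]

lemma cond_iff {m : ℕ} {ρ : Equiv.Perm (Fin (m + 2))} {A : Fin (m + 2) → Bool}
    (hK : (K ρ A).Nonempty) (s : Fin (m + 2)) :
    (A s = true ∧ ∀ ℓ, ℓ < ρ.symm s → A (ρ ℓ) = false) ↔ s = ρ ((K ρ A).min' hK) := by
  constructor
  · rintro ⟨h1, h2⟩
    have hk : ρ.symm s ∈ K ρ A := by rw [mem_K, Equiv.apply_symm_apply]; exact h1
    have hle := (K ρ A).min'_le _ hk
    rcases lt_or_eq_of_le hle with hlt | heq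
    · have h3 := h2 _ hlt
      have hmem := (K ρ A).min'_mem hK
      rw [mem_K] at hmem
      rw [h3] at hmem; cases hmem
    · rw [heq, Equiv.apply_symm_apply]
  · rintro rfl
    constructor
    · have := (K ρ A).min'_mem hK; rwa [mem_K] at this
    · intro ℓ hℓ
      rw [Equiv.symm_apply_apply] at hℓ
      by_contra hne
      have h4 : A (ρ ℓ) = true := by
        cases h : A (ρ ℓ) with
        | false => exact absurd h hne
        | true => rfl
      exact absurd ((K ρ A).min'_le ℓ (mem_K.mpr h4)) (not_le.mpr hℓ)

lemma cond_empty {m : ℕ} {ρ : Equiv.Perm (Fin (m + 2))} {A : Fin (m + 2) → Bool}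
    (hK : ¬(K ρ A).Nonempty) (s : Fin (m + 2)) :
    ¬(A s = true ∧ ∀ ℓ, ℓ < ρ.symm s → A (ρ ℓ) = false) := by
  rintro ⟨h1, -⟩
  exact hK ⟨ρ.symm s, mem_K.mpr (by rwa [Equiv.apply_symm_apply])⟩

noncomputable def Gm {m : ℕ} (P : (Fin (m + 2) → Bool) → ℝ)
    (ρ : Equiv.Perm (Fin (m + 2))) (t : ℕ) : ℝ :=
  ∑ s : Fin (m + 2), if s.val ≤ t then matchProb P ρ s else 0

lemma Gm_eq {m : ℕ} (P : (Fin (m + 2) → Bool) → ℝ) (ρ : Equiv.Perm (Fin (m + 2))) (t : ℕ) :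
    Gm P ρ t = ∑ A : Fin (m + 2) → Bool,
      (if h : (K ρ A).Nonempty then
        (if (ρ ((K ρ A).min' h)).val ≤ t then P A else 0) else 0) := by
  unfold Gm matchProb
  have h1 : ∀ s : Fin (m + 2),
      (if s.val ≤ t then (∑ A : Fin (m + 2) → Bool,
        if A s = true ∧ ∀ ℓ, ℓ < ρ.symm s → A (ρ ℓ) = false then P A else 0) else 0)
      = ∑ A : Fin (m + 2) → Bool,
        (if s.val ≤ t then (if A s = true ∧ ∀ ℓ, ℓ < ρ.symm s → A (ρ ℓ) = false
          then P A else 0) else 0) := by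
    intro s; split <;> simp
  rw [sum_congr rfl (fun s _ => h1 s), Finset.sum_comm]
  refine sum_congr rfl fun A _ => ?_
  by_cases hK : (K ρ A).Nonempty
  · rw [dif_pos hK]
    set s₀ := ρ ((K ρ A).min' hK) with hs₀
    have h2 : ∀ s : Fin (m + 2),
        (if s.val ≤ t then (if A s = true ∧ ∀ ℓ, ℓ < ρ.symm s → A (ρ ℓ) = false
          then P A else 0) else 0)
        = (if s = s₀ then (if s₀.val ≤ t then P A else 0) else 0) := by
      intro s
      by_cases hs : s = s₀
      · subst hs
        rw [if_pos rfl, if_pos ((cond_iff hK s₀).mpr hs₀)]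
      · rw [if_neg hs, if_neg (fun hc => hs ((cond_iff hK s).mp hc))]
        simp
    rw [sum_congr rfl (fun s _ => h2 s), Finset.sum_ite_eq' univ s₀]
    simp
  · rw [dif_neg hK]
    refine sum_eq_zero fun s _ => ?_
    rw [if_neg (cond_empty hK s)]
    simp

lemma matchProb_nonneg {m : ℕ} {P : (Fin (m + 2) → Bool) → ℝ} (hP : ∀ A, 0 ≤ P A)
    (ρ : Equiv.Perm (Fin (m + 2))) (s : Fin (m + 2)) : 0 ≤ matchProb P ρ s := by
  refine sum_nonneg fun A _ => ?_
  split
  · exact hP A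
  · exact le_refl 0

lemma Gm_le {m : ℕ} {P : (Fin (m + 2) → Bool) → ℝ} (hP : ∀ A, 0 ≤ P A)
    (ρ : Equiv.Perm (Fin (m + 2))) (t : ℕ) :
    Gm P ρ t ≤ Gm P (Equiv.refl (Fin (m + 2))) t := by
  rw [Gm_eq, Gm_eq]
  refine sum_le_sum fun A _ => ?_
  by_cases hK : (K ρ A).Nonempty
  · rw [dif_pos hK]
    have hK' : (K (Equiv.refl (Fin (m + 2))) A).Nonempty := by
      obtain ⟨k, hk⟩ := hK
      exact ⟨ρ k, mem_K.mpr (by simpa using mem_K.mp hk)⟩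
    rw [dif_pos hK']
    simp only [Equiv.refl_apply]
    have hle : ((K (Equiv.refl (Fin (m+2))) A).min' hK').val ≤ (ρ ((K ρ A).min' hK)).val := by
      have hmem : ρ ((K ρ A).min' hK) ∈ K (Equiv.refl (Fin (m+2))) A := by
        rw [mem_K, Equiv.refl_apply]
        have := (K ρ A).min'_mem hK; rwa [mem_K] at this
      exact (K (Equiv.refl (Fin (m+2))) A).min'_le _ hmem
    split
    · rename_i h
      exact le_of_eq (if_pos (le_trans hle h)).symm
    · apply ite_nonneg
      · exact hP A
      · exact le_refl 0
  · rw [dif_neg hK]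
    split
    · split
      · exact hP A
      · exact le_refl 0
    · exact le_refl 0

lemma sum_matchProb {m : ℕ} {P : (Fin (m + 2) → Bool) → ℝ} (hP : IsAttDist P)
    (ρ : Equiv.Perm (Fin (m + 2))) : ∑ s, matchProb P ρ s = 1 := by
  have h0 : ∑ s, matchProb P ρ s = Gm P ρ (m + 1) := by
    refine sum_congr rfl fun s _ => ?_
    rw [if_pos (Nat.lt_succ_iff.mp s.isLt)]
  rw [h0, Gm_eq]
  rw [← hP.2.1]
  refine sum_congr rfl fun A _ => ?_
  by_cases hK : (K ρ A).Nonempty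
  · rw [dif_pos hK, if_pos (Nat.lt_succ_iff.mp (ρ ((K ρ A).min' hK)).isLt)]
  · rw [dif_neg hK]
    have hlast : A (Fin.last (m + 1)) = false := by
      by_contra h
      exact hK ⟨ρ.symm (Fin.last (m + 1)), mem_K.mpr (by
        rw [Equiv.apply_symm_apply]
        cases hb : A (Fin.last (m + 1)) with
        | false => exact absurd hb h
        | true => rfl)⟩
    rw [hP.2.2 A hlast]

lemma Gm_nonneg {m : ℕ} {P : (Fin (m + 2) → Bool) → ℝ} (hP : ∀ A, 0 ≤ P A)
    (ρ : Equiv.Perm (Fin (m + 2))) (t : ℕ) : 0 ≤ Gm P ρ t := by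
  refine sum_nonneg fun s _ => ?_
  split
  · exact matchProb_nonneg hP ρ s
  · exact le_refl 0

lemma Gm_le_one {m : ℕ} {P : (Fin (m + 2) → Bool) → ℝ} (hP : IsAttDist P)
    (ρ : Equiv.Perm (Fin (m + 2))) (t : ℕ) : Gm P ρ t ≤ 1 := by
  rw [← sum_matchProb hP ρ]
  refine sum_le_sum fun s _ => ?_
  split
  · exact le_refl _
  · exact matchProb_nonneg hP.1 ρ s

/-! ### The counterexample distribution for Λ > 1 -/

def A0 {m : ℕ} : Fin (m + 2) → Bool := fun i => decide (i = Fin.last (m + 1))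
def A1 {m : ℕ} : Fin (m + 2) → Bool :=
  fun i => decide (i = 0) || decide (i = Fin.last (m + 1))

lemma zero_ne_last {m : ℕ} : (0 : Fin (m + 2)) ≠ Fin.last (m + 1) := by
  simp [Fin.ext_iff]

lemma zero_lt_last {m : ℕ} : (0 : Fin (m + 2)) < Fin.last (m + 1) := by
  simp [Fin.lt_def]

lemma A0_ne_A1 {m : ℕ} : (A0 : Fin (m+2) → Bool) ≠ A1 := by
  intro h
  have := congrFun h 0
  simp [A0, A1, zero_ne_last] at this

noncomputable def Pex {m : ℕ} (p : ℝ) : (Fin (m + 2) → Bool) → ℝ :=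
  fun A => if A = A1 then p else if A = A0 then 1 - p else 0

lemma Pex_other {m : ℕ} (p : ℝ) (A : Fin (m+2) → Bool) (h0 : A ≠ A0) (h1 : A ≠ A1) :
    Pex p A = 0 := by
  simp [Pex, h0, h1]

lemma sum_two {m : ℕ} (F : (Fin (m+2) → Bool) → ℝ) (h : ∀ A, A ≠ A0 → A ≠ A1 → F A = 0) :
    ∑ A, F A = F A0 + F A1 := by
  rw [← Finset.sum_pair (A0_ne_A1 (m := m))]
  refine (Finset.sum_subset (Finset.subset_univ _) fun A _ hA => ?_).symm
  simp only [mem_insert, mem_singleton] at hA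
  push_neg at hA
  exact h A hA.1 hA.2

lemma Pex_isAtt {m : ℕ} (p : ℝ) (hp0 : 0 ≤ p) (hp1 : p ≤ 1) : IsAttDist (Pex (m := m) p) := by
  refine ⟨fun A => ?_, ?_, fun A hA => ?_⟩
  · unfold Pex; split
    · exact hp0
    · split
      · linarith
      · exact le_refl 0
  · rw [sum_two _ (fun A h0 h1 => Pex_other p A h0 h1)]
    rw [Pex, Pex]
    simp [A0_ne_A1 (m := m)]
  · refine Pex_other p A (fun e => ?_) (fun e => ?_) <;> subst e <;> simp [A0, A1] at hA

lemma mp_refl {m : ℕ} (p : ℝ) (s : Fin (m + 2)) :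
    matchProb (Pex p) (Equiv.refl (Fin (m+2))) s
      = (if s = Fin.last (m + 1) then 1 - p else 0) + (if s = 0 then p else 0) := by
  unfold matchProb
  rw [sum_two _ (fun A h0 h1 => by rw [Pex_other p A h0 h1]; split <;> rfl)]
  have c0 : ((A0 : Fin (m+2) → Bool) s = true ∧
      ∀ ℓ, ℓ < (Equiv.refl (Fin (m+2))).symm s → A0 ((Equiv.refl (Fin (m+2))) ℓ) = false)
      ↔ s = Fin.last (m + 1) := by
    simp only [Equiv.refl_symm, Equiv.refl_apply]
    constructor
    · rintro ⟨h1, -⟩; simpa [A0] using h1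
    · rintro rfl
      exact ⟨by simp [A0], fun ℓ hℓ => by simp [A0]; exact ne_of_lt hℓ⟩
  have c1 : ((A1 : Fin (m+2) → Bool) s = true ∧
      ∀ ℓ, ℓ < (Equiv.refl (Fin (m+2))).symm s → A1 ((Equiv.refl (Fin (m+2))) ℓ) = false)
      ↔ s = 0 := by
    simp only [Equiv.refl_symm, Equiv.refl_apply]
    constructor
    · rintro ⟨h1, h2⟩
      simp only [A1, Bool.or_eq_true, decide_eq_true_eq] at h1
      rcases h1 with h1 | h1
      · exact h1
      · subst h1
        have := h2 0 zero_lt_last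
        simp [A1] at this
    · rintro rfl
      exact ⟨by simp [A1], fun ℓ hℓ => absurd hℓ (Fin.not_lt_zero ℓ)⟩
  have e0 : Pex (m := m) p A0 = 1 - p := by simp [Pex, A0_ne_A1 (m := m)]
  have e1 : Pex (m := m) p A1 = p := by simp [Pex]
  rw [e0, e1]
  simp only [c0, c1]

lemma mp_swap {m : ℕ} (p : ℝ) (s : Fin (m + 2)) :
    matchProb (Pex p) (Equiv.swap 0 (Fin.last (m+1))) s
      = if s = Fin.last (m + 1) then 1 else 0 := by
  unfold matchProb
  rw [sum_two _ (fun A h0 h1 => by rw [Pex_other p A h0 h1]; split <;> rfl)]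
  set σ := Equiv.swap (0 : Fin (m+2)) (Fin.last (m+1)) with hσ
  have hgen : ∀ A : Fin (m+2) → Bool, A (Fin.last (m+1)) = true →
      ((A s = true ∧ ∀ ℓ, ℓ < σ.symm s → A (σ ℓ) = false) ↔ s = Fin.last (m + 1)) := by
    intro A hAl
    constructor
    · rintro ⟨h1, h2⟩
      by_contra hs
      have hpos : 0 < σ.symm s := by
        rw [hσ, Equiv.symm_swap]
        by_cases h0 : s = 0
        · subst h0; rw [Equiv.swap_apply_left]; exact zero_lt_last
        · rw [Equiv.swap_apply_of_ne_of_ne h0 hs]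
          exact Fin.pos_of_ne_zero h0
      have := h2 0 hpos
      rw [hσ, Equiv.swap_apply_left, hAl] at this
      cases this
    · rintro rfl
      refine ⟨hAl, fun ℓ hℓ => ?_⟩
      rw [hσ, Equiv.symm_swap, Equiv.swap_apply_right] at hℓ
      exact absurd hℓ (Fin.not_lt_zero ℓ)
  have hl0 : (A0 : Fin (m+2) → Bool) (Fin.last (m+1)) = true := by simp [A0]
  have hl1 : (A1 : Fin (m+2) → Bool) (Fin.last (m+1)) = true := by simp [A1]
  have e0 : Pex (m := m) p A0 = 1 - p := by simp [Pex, A0_ne_A1 (m := m)]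
  have e1 : Pex (m := m) p A1 = p := by simp [Pex]
  rw [e0, e1]
  simp only [hgen A0 hl0, hgen A1 hl1]
  split <;> ring

/-! ### Utility computations for the counterexample -/

lemma u_safe {m : ℕ} (Λ : ℝ) (v : Fin (m+2) → ℝ) :
    utility Λ v (fun s => if s = Fin.last (m+1) then 1 else 0) = v (Fin.last (m+1)) := by
  unfold utility
  have h1 : ∑ s : Fin (m+2), (if s = Fin.last (m+1) then (1:ℝ) else 0) * v s
      = v (Fin.last (m+1)) := by
    simp only [ite_mul, one_mul, zero_mul]
    rw [Finset.sum_ite_eq' univ (Fin.last (m+1)) v]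
    simp
  have h2 : ∑ s : Fin (m+2), ∑ r ∈ univ.filter (fun r => s < r),
      (if s = Fin.last (m+1) then (1:ℝ) else 0) * (if r = Fin.last (m+1) then (1:ℝ) else 0)
        * (v s - v r) = 0 := by
    refine sum_eq_zero fun s _ => sum_eq_zero fun r hr => ?_
    have hsr := (mem_filter.mp hr).2
    have hs : s ≠ Fin.last (m+1) :=
      fun e => absurd hsr (by rw [e]; exact not_lt.mpr (Fin.le_last r))
    rw [if_neg hs]
    ring
  rw [h1, h2]
  ring

lemma u_true {m : ℕ} (Λ p : ℝ) (v : Fin (m+2) → ℝ) :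
    utility Λ v (fun s => (if s = Fin.last (m+1) then 1-p else 0) + (if s = 0 then p else 0))
      = v (Fin.last (m+1)) + (v 0 - v (Fin.last (m+1))) * (p - Λ * (p * (1 - p))) := by
  set g : Fin (m+2) → ℝ :=
    fun s => (if s = Fin.last (m+1) then 1-p else 0) + (if s = 0 then p else 0) with hg
  have hsum : ∑ s, g s = 1 := by
    simp only [hg, sum_add_distrib]
    rw [Finset.sum_ite_eq' univ (Fin.last (m+1)) (fun _ => (1-p : ℝ)),
        Finset.sum_ite_eq' univ (0 : Fin (m+2)) (fun _ => (p : ℝ))]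
    simp
  have hS : ∑ j ∈ range (m+2), e g j = 1 := by rw [sum_e]; exact hsum
  have hc : ∀ t ∈ range (m+1), ∑ j ∈ range (t+1), e g j = p := by
    intro t ht
    have htm : t < m + 2 := lt_trans (mem_range.mp ht) (Nat.lt_succ_self _)
    rw [range_cumul g t htm]
    have htm1 : t < m + 1 := mem_range.mp ht
    have hterm : ∀ s : Fin (m+2), (if s.val ≤ t then g s else 0)
        = (if s = 0 then p else 0) := by
      intro s
      by_cases h0 : s = 0
      · subst h0
        simp [hg, zero_ne_last]
      · rw [if_neg h0]
        by_cases hl : s = Fin.last (m+1)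
        · subst hl
          rw [if_neg (by simp [Fin.val_last]; omega)]
        · split
          · simp [hg, hl, h0]
          · rfl
    rw [sum_congr rfl (fun s _ => hterm s),
        Finset.sum_ite_eq' univ (0 : Fin (m+2)) (fun _ => (p:ℝ))]
    simp
  rw [utility_eq_nat, key_identity Λ (e g) (e v) (m+2) hS]
  have hn1 : m + 2 - 1 = m + 1 := rfl
  rw [hn1]
  have hconst : ∑ t ∈ range (m+1), (e v t - e v (t+1)) *
      ((∑ j ∈ range (t+1), e g j)
        - Λ * ((∑ j ∈ range (t+1), e g j) * (1 - ∑ j ∈ range (t+1), e g j)))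
      = (e v 0 - e v (m+1)) * (p - Λ * (p * (1 - p))) := by
    have h5 : ∀ t ∈ range (m+1), (e v t - e v (t+1)) *
        ((∑ j ∈ range (t+1), e g j)
          - Λ * ((∑ j ∈ range (t+1), e g j) * (1 - ∑ j ∈ range (t+1), e g j)))
        = (e v t - e v (t+1)) * (p - Λ * (p * (1 - p))) := by
      intro t ht; rw [hc t ht]
    rw [sum_congr rfl h5, ← sum_mul, Finset.sum_range_sub' (fun i => e v i) (m+1)]
  rw [hconst]
  have hev1 : e v (m+1) = v (Fin.last (m+1)) := by
    simp [e, Fin.last]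
  have hev0 : e v 0 = v 0 := by
    have h6 : (0 : ℕ) < m + 2 := by omega
    simp [e, h6]
  rw [hev1, hev0]

end Stmt14Aux

open Stmt14Aux in
/-- with fixed `m ≥ 2`, strictly decreasing cardinal utilities and
loss dominance `Λ ≥ 0`, the true ROL (the identity) is optimal for every
attainability distribution if and only if `Λ ≤ 1`. -/

theorem stmt_14 (m : ℕ) (Λ : ℝ) (hΛ : 0 ≤ Λ) (v : Fin (m + 2) → ℝ)
    (hv : StrictAnti v) :
    (∀ P : (Fin (m + 2) → Bool) → ℝ, IsAttDist P →
        Optimal Λ v P (Equiv.refl (Fin (m + 2)))) ↔ Λ ≤ 1 := by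
  constructor
  · intro h
    by_contra hΛ1
    push_neg at hΛ1
    set p : ℝ := (Λ - 1) / (2 * Λ) with hp
    have hΛ0 : 0 < Λ := lt_trans one_pos hΛ1
    have hp0 : 0 < p := div_pos (by linarith) (by linarith)
    have hp1 : p < 1 := by
      rw [hp, div_lt_one (by linarith)]; linarith
    have hopt := h (Pex p) (Pex_isAtt p (le_of_lt hp0) (le_of_lt hp1))
      (Equiv.swap 0 (Fin.last (m+1)))
    have e1 : matchProb (Pex p) (Equiv.swap 0 (Fin.last (m+1)))
        = fun s => if s = Fin.last (m+1) then (1:ℝ) else 0 := funext (mp_swap p)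
    have e2 : matchProb (Pex p) (Equiv.refl (Fin (m+2)))
        = fun s => (if s = Fin.last (m+1) then 1-p else 0) + (if s = 0 then p else 0) :=
      funext (mp_refl p)
    rw [e1, e2, u_safe, u_true] at hopt
    have hv0 : v (Fin.last (m+1)) < v 0 := hv zero_lt_last
    have hΛp : Λ * p = (Λ - 1) / 2 := by
      rw [hp]; field_simp
    have hkey : p - Λ * (p * (1 - p)) = p * (1 - Λ) / 2 := by
      have h7 : p - Λ * (p * (1 - p)) = p * (1 - Λ) + p * (Λ * p) := by ring
      rw [h7, hΛp]; ring
    have hq : p - Λ * (p * (1 - p)) < 0 := by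
      rw [hkey]
      have h8 : 0 < p * (Λ - 1) := mul_pos hp0 (by linarith)
      nlinarith
    have h9 : (v 0 - v (Fin.last (m+1))) * (p - Λ * (p * (1 - p))) < 0 :=
      mul_neg_of_pos_of_neg (sub_pos.mpr hv0) hq
    linarith
  · intro hΛ1 P hP ρ
    have h1' : ∑ j ∈ range (m+2), e (matchProb P ρ) j = 1 := by
      rw [sum_e]; exact sum_matchProb hP ρ
    have h1 : ∑ j ∈ range (m+2), e (matchProb P (Equiv.refl (Fin (m+2)))) j = 1 := by
      rw [sum_e]; exact sum_matchProb hP (Equiv.refl (Fin (m+2)))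
    rw [utility_eq_nat, utility_eq_nat,
        key_identity Λ (e (matchProb P ρ)) (e v) (m+2) h1',
        key_identity Λ (e (matchProb P (Equiv.refl (Fin (m+2))))) (e v) (m+2) h1]
    have hn1 : m + 2 - 1 = m + 1 := rfl
    rw [hn1]
    refine add_le_add (le_refl _) (sum_le_sum fun t ht => ?_)
    have ht1 : t < m + 1 := mem_range.mp ht
    have htm : t < m + 2 := by omega
    have hx := range_cumul (matchProb P ρ) t htm
    have hy := range_cumul (matchProb P (Equiv.refl (Fin (m+2)))) t htm
    set x := ∑ j ∈ range (t+1), e (matchProb P ρ) j with hxdef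
    set y := ∑ j ∈ range (t+1), e (matchProb P (Equiv.refl (Fin (m+2)))) j with hydef
    have hxG : x = Gm P ρ t := hx
    have hyG : y = Gm P (Equiv.refl (Fin (m+2))) t := hy
    have hx0 : 0 ≤ x := by rw [hxG]; exact Gm_nonneg hP.1 ρ t
    have hxy : x ≤ y := by rw [hxG, hyG]; exact Gm_le hP.1 ρ t
    have hy1 : y ≤ 1 := by rw [hyG]; exact Gm_le_one hP (Equiv.refl (Fin (m+2))) t
    have hΔ : 0 ≤ e v t - e v (t+1) := by
      have h2 : t + 1 < m + 2 := by omega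
      have hev1 : e v t = v ⟨t, htm⟩ := by simp [e, htm]
      have hev2 : e v (t+1) = v ⟨t+1, h2⟩ := by simp [e, h2]
      rw [hev1, hev2, sub_nonneg]
      exact le_of_lt (hv (by simp [Fin.mk_lt_mk]))
    refine mul_le_mul_of_nonneg_left ?_ hΔ
    have hfac : 0 ≤ 1 - Λ + Λ * (x + y) := by
      have := mul_nonneg hΛ (by linarith : (0:ℝ) ≤ x + y)
      linarith
    nlinarith [mul_nonneg (sub_nonneg.mpr hxy) hfac]
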